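/- Let # be a grade involution on Λ and let π₀ : Λ → ℂ denote the projection onto the degree-0 component (the 'complex part' or body). For triples u = (u₁, u₂, u₃) and v = (v₁, v₂, v₃) of elements of Λ with u₁, u₂, v₁, v₂ even and u₃, v₃ odd, and inner product ⟨u|v⟩ := (#u₁)*v₁ + (#u₂)*v₂ + (#u₃)*v₃, the body of the inner product equals the standard Hermitian inner product of the bodies: π₀(⟨u|v⟩) = conj(π₀ u₁) * (π₀ v₁) + conj(π₀ u₂) * (π₀ v₂). (Consistency: the supersymmetric inner product restricts to the ordinary quantum-mechanical one on the non-Grassmann parts.) -/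

import Mathlib

noncomputable section

abbrev Λ : Type := ExteriorAlgebra ℂ (Fin 2 → ℂ)

def η : Λ := ExteriorAlgebra.ι ℂ (Pi.single 0 1)

def η' : Λ := ExteriorAlgebra.ι ℂ (Pi.single 1 1)

/-- A grade involution `#` on `Λ`. -/
def IsGradeInvolution (f : Λ → Λ) : Prop :=
  (∀ x y : Λ, f (x + y) = f x + f y) ∧
  (∀ (c : ℂ) (x : Λ), f (c • x) = (starRingEnd ℂ c) • f x) ∧
  (∀ x y : Λ, f (x * y) = f x * f y) ∧
  (∀ (k : ℕ) (x : Λ), x ∈ ⋀[ℂ]^k (Fin 2 → ℂ) → f x ∈ ⋀[ℂ]^k (Fin 2 → ℂ)) ∧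
  (∀ (k : ℕ) (x : Λ), x ∈ ⋀[ℂ]^k (Fin 2 → ℂ) → f (f x) = ((-1 : ℂ) ^ k) • x)

/-- The submodule of even supernumbers. -/
def evenPart : Submodule ℂ Λ :=
  ⨆ k : ℕ, ⋀[ℂ]^(2 * k) (Fin 2 → ℂ)

/-- The submodule of odd supernumbers. -/
def oddPart : Submodule ℂ Λ :=
  ⨆ k : ℕ, ⋀[ℂ]^(2 * k + 1) (Fin 2 → ℂ)

/-- The projection onto the degree-0 component (the body, or complex part), realized
as the algebra morphism `Λ →ₐ[ℂ] ℂ` killing the generators. -/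
def π₀ : Λ →ₐ[ℂ] ℂ := ExteriorAlgebra.algebraMapInv

lemma exteriorPower_zero_eq : ⋀[ℂ]^0 (Fin 2 → ℂ) = (1 : Submodule ℂ Λ) := pow_zero _

lemma π₀_ι (m : Fin 2 → ℂ) : π₀ (ExteriorAlgebra.ι ℂ m) = 0 := by
  simp [π₀, ExteriorAlgebra.algebraMapInv]

/-- π₀ kills positive-degree components. -/
lemma π₀_pos (k : ℕ) (x : Λ) (hx : x ∈ ⋀[ℂ]^(k+1) (Fin 2 → ℂ)) : π₀ x = 0 := by
  rw [show ⋀[ℂ]^(k+1) (Fin 2 → ℂ)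
      = LinearMap.range (ExteriorAlgebra.ι ℂ : (Fin 2 → ℂ) →ₗ[ℂ] Λ) *
        LinearMap.range (ExteriorAlgebra.ι ℂ : (Fin 2 → ℂ) →ₗ[ℂ] Λ) ^ k
    from pow_succ' _ _] at hx
  refine Submodule.mul_induction_on hx ?_ ?_
  · rintro a ⟨m, rfl⟩ b _
    rw [map_mul, π₀_ι, zero_mul]
  · intro a b ha hb
    rw [map_add, ha, hb, add_zero]

lemma π₀_odd (x : Λ) (hx : x ∈ oddPart) : π₀ x = 0 := by
  refine Submodule.iSup_induction _ (motive := fun y => π₀ y = 0) hx ?_ (map_zero _) ?_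
  · intro k y hy
    exact π₀_pos _ _ hy
  · intro a b ha hb
    rw [map_add, ha, hb, add_zero]

lemma grade_involution_one (f : Λ → Λ) (hf : IsGradeInvolution f) : f 1 = 1 := by
  obtain ⟨hadd, hsmul, hmul, hdeg, hinv⟩ := hf
  have h1 : (1 : Λ) ∈ ⋀[ℂ]^0 (Fin 2 → ℂ) := by
    rw [exteriorPower_zero_eq]; exact Submodule.one_le.mp le_rfl
  have hf1 : f 1 ∈ ⋀[ℂ]^0 (Fin 2 → ℂ) := hdeg 0 1 h1
  rw [exteriorPower_zero_eq, Submodule.mem_one] at hf1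
  obtain ⟨c, hc⟩ := hf1
  have hidem : f 1 * f 1 = f 1 := by rw [← hmul, one_mul]
  have hci : c * c = c := by
    have := hidem
    rw [← hc, ← map_mul] at this
    exact (ExteriorAlgebra.algebraMap_inj _ _ _).mp this
  have hinv1 : f (f 1) = 1 := by
    have := hinv 0 1 h1
    simpa using this
  have hcne : c ≠ 0 := by
    rintro rfl
    rw [map_zero] at hc
    rw [← hc, show f (0 : Λ) = 0 from ?_] at hinv1
    · exact one_ne_zero hinv1.symm
    · have := hadd 0 0
      simpa using this.symm
  have : c = 1 := by
    have h0 : c * (c - 1) = 0 := by linear_combination hci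
    rcases mul_eq_zero.mp h0 with h | h
    · exact absurd h hcne
    · exact sub_eq_zero.mp h
  rw [← hc, this, map_one]

lemma grade_involution_algebraMap (f : Λ → Λ) (hf : IsGradeInvolution f) (c : ℂ) :
    f (algebraMap ℂ Λ c) = algebraMap ℂ Λ (starRingEnd ℂ c) := by
  have := hf.2.1 c 1
  rw [grade_involution_one f hf, Algebra.smul_def, Algebra.smul_def, mul_one, mul_one] at this
  exact this

lemma f_zero (f : Λ → Λ) (hf : IsGradeInvolution f) : f 0 = 0 := by
  have := hf.1 0 0
  simpa using this.symm

/-- key lemma: for even x, π₀ (f x) = conj (π₀ x). -/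
lemma π₀_f_even (f : Λ → Λ) (hf : IsGradeInvolution f) (x : Λ) (hx : x ∈ evenPart) :
    π₀ (f x) = starRingEnd ℂ (π₀ x) := by
  refine Submodule.iSup_induction _ (motive := fun y => π₀ (f y) = starRingEnd ℂ (π₀ y)) hx ?_ ?_ ?_
  · intro k y hy
    match k with
    | 0 =>
      rw [Nat.mul_zero, exteriorPower_zero_eq, Submodule.mem_one] at hy
      obtain ⟨c, rfl⟩ := hy
      rw [grade_involution_algebraMap f hf]
      simp [π₀, ExteriorAlgebra.algebraMap_leftInverse _ _]
    | (k+1) =>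
      have he : 2*(k+1) = (2*k+1)+1 := by omega
      rw [he] at hy
      have h1 : π₀ y = 0 := π₀_pos (2*k+1) y hy
      have h2 : π₀ (f y) = 0 := π₀_pos (2*k+1) (f y) (hf.2.2.2.1 _ y hy)
      rw [h1, h2, map_zero]
  · show π₀ (f 0) = starRingEnd ℂ (π₀ 0)
    rw [f_zero f hf]; simp
  · intro a b ha hb
    show π₀ (f (a + b)) = starRingEnd ℂ (π₀ (a + b))
    rw [hf.1, map_add, map_add, map_add, ha, hb]

theorem inner_product_body_consistency (f : Λ → Λ) (hf : IsGradeInvolution f)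
    (u v : Fin 3 → Λ)
    (hu0 : u 0 ∈ evenPart) (hu1 : u 1 ∈ evenPart) (hu2 : u 2 ∈ oddPart)
    (hv0 : v 0 ∈ evenPart) (hv1 : v 1 ∈ evenPart) (hv2 : v 2 ∈ oddPart) :
    π₀ (f (u 0) * v 0 + f (u 1) * v 1 + f (u 2) * v 2) =
      starRingEnd ℂ (π₀ (u 0)) * π₀ (v 0) + starRingEnd ℂ (π₀ (u 1)) * π₀ (v 1) := by
  rw [map_add, map_add, map_mul, map_mul, map_mul,
    π₀_f_even f hf _ hu0, π₀_f_even f hf _ hu1, π₀_odd _ hv2, mul_zero, add_zero]
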